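/- arXiv:2412.20111 — 2 statements merged into one kernel-verified Lean document; each statement's English description precedes it below -/
import Mathlib

section
/- The Berezin integral over n pairs of Grassmann variables of the exponential of the quadratic form (ξ̄, Aξ) = Σᵢⱼ ξ̄ᵢ A(i,j) ξⱼ equals det(A), for any real n×n matrix A (no positivity or symmetry assumption needed). -/
open ExteriorAlgebra

noncomputable section

/-- Truncated exponential `Σ_{k<N} x^k / k!` (the full series terminates on nilpotents). -/
def texp {A : Type*} [Ring A] [Algebra ℝ A] (x : A) (N : ℕ) : A :=
  ∑ k ∈ Finset.range N, ((Nat.factorial k : ℝ)⁻¹) • x ^ k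

/-- The Grassmann algebra on `2n` generators `ξ₁,…,ξₙ, ξ̄₁,…,ξ̄ₙ`. -/
abbrev GA (n : ℕ) := ExteriorAlgebra ℝ ((Fin n ⊕ Fin n) → ℝ)

/-- The generator `ξᵢ`. -/
def xi {n : ℕ} (i : Fin n) : GA n := ι ℝ (Pi.single (Sum.inl i) 1)

/-- The generator `ξ̄ᵢ`. -/
def xibar {n : ℕ} (i : Fin n) : GA n := ι ℝ (Pi.single (Sum.inr i) 1)

section AuxList
variable {R : Type*} [Ring R]

lemma aux_mul_list_sum (x : R) (m : List R) (h : ∀ b ∈ m, x * b = 0) : x * m.sum = 0 := by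
  induction m with
  | nil => simp
  | cons c t ih =>
    rw [List.sum_cons, mul_add, h c (by simp), ih (fun b hb => h b (by simp [hb])), add_zero]

lemma aux_prod_mul (l : List R) (hc : ∀ a ∈ l, ∀ b ∈ l, Commute a b)
    (hsq : ∀ a ∈ l, a * a = 0) : ∀ b ∈ l, l.prod * b = 0 := by
  induction l with
  | nil => intro b hb; simp at hb
  | cons c t ih =>
    intro b hb
    have hct : Commute c t.prod :=
      Commute.list_prod_right _ _ (fun y hy => hc c (by simp) y (by simp [hy]))
    rw [List.prod_cons]
    rcases List.mem_cons.1 hb with rfl | hb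
    · rw [mul_assoc, ← hct.eq, ← mul_assoc, hsq b (by simp), zero_mul]
    · rw [mul_assoc, ih (fun a ha b' hb' => hc a (by simp [ha]) b' (by simp [hb']))
        (fun a ha => hsq a (by simp [ha])) b hb, mul_zero]

lemma aux_sum_pow (l : List R) (hc : ∀ a ∈ l, ∀ b ∈ l, Commute a b)
    (hsq : ∀ a ∈ l, a * a = 0) : l.sum ^ l.length = l.length.factorial • l.prod := by
  induction l with
  | nil => simp
  | cons a t ih =>
    have hc' : ∀ x ∈ t, ∀ y ∈ t, Commute x y := fun x hx y hy =>
      hc x (by simp [hx]) y (by simp [hy])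
    have hsq' : ∀ x ∈ t, x * x = 0 := fun x hx => hsq x (by simp [hx])
    have hat : Commute a t.sum :=
      Commute.list_sum_right _ _ (fun b hb => hc a (by simp) b (by simp [hb]))
    have hSm : t.sum ^ t.length = t.length.factorial • t.prod := ih hc' hsq'
    have hS1 : t.sum ^ (t.length + 1) = 0 := by
      rw [pow_succ, hSm, smul_mul_assoc, aux_mul_list_sum _ _ (aux_prod_mul t hc' hsq'),
        smul_zero]
    rw [List.sum_cons, List.length_cons, hat.add_pow]
    rw [Finset.sum_eq_single_of_mem 1 (by simp)]
    · rw [pow_one, Nat.add_sub_cancel, hSm, Nat.choose_one_right, List.prod_cons,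
        Nat.factorial_succ, mul_smul_comm, smul_mul_assoc, mul_smul, nsmul_eq_mul,
        ← (Nat.cast_commute (t.length + 1) _).eq, nsmul_eq_mul, nsmul_eq_mul,
        ← mul_assoc, ← mul_assoc,
        (Nat.cast_commute (t.length.factorial) ((t.length+1 : ℕ) : R)).eq, mul_assoc, mul_assoc]
    · intro k hk hk1
      rcases Nat.lt_or_ge k 2 with h2 | h2
      · have hk0 : k = 0 := by omega
        subst hk0
        rw [Nat.sub_zero, hS1, pow_zero, one_mul, zero_mul]
      · have ha2 : a ^ 2 = 0 := by rw [sq]; exact hsq a (by simp)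
        have hak : a ^ k = 0 := by
          have : a ^ k = a ^ 2 * a ^ (k - 2) := by rw [← pow_add]; congr 1; omega
          rw [this, ha2, zero_mul]
        rw [hak, zero_mul, zero_mul]

lemma aux_mul_prod_zero (a : R) (l : List R) (hca : ∀ x ∈ l, Commute a x)
    (hc : ∀ x ∈ l, ∀ y ∈ l, Commute x y) (hb : ∃ b ∈ l, a * b = 0) : a * l.prod = 0 := by
  induction l with
  | nil => simp at hb
  | cons c t ih =>
    obtain ⟨b, hbmem, hab⟩ := hb
    rw [List.prod_cons, ← mul_assoc]
    rcases List.mem_cons.1 hbmem with rfl | hbt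
    · rw [hab, zero_mul]
    · rw [(hca c (by simp)).eq, mul_assoc,
        ih (fun x hx => hca x (by simp [hx]))
          (fun x hx y hy => hc x (by simp [hx]) y (by simp [hy])) ⟨b, hbt, hab⟩, mul_zero]

lemma aux_ofFn_prod_zero : ∀ {m : ℕ} (f : Fin m → R),
    (∀ p q, Commute (f p) (f q)) → ∀ i j : Fin m, i ≠ j → f i * f j = 0 → f j * f i = 0 →
    (List.ofFn f).prod = 0 := by
  intro m
  induction m with
  | zero => intro f _ i; exact absurd i.2 (by omega)
  | succ m ih =>
    intro f hc i j hij h1 h2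
    rw [List.ofFn_succ, List.prod_cons]
    have hcmem : ∀ x ∈ List.ofFn (fun k : Fin m => f k.succ),
        ∀ y ∈ List.ofFn (fun k : Fin m => f k.succ), Commute x y := by
      intro x hx y hy
      obtain ⟨p, rfl⟩ := List.mem_ofFn.1 hx
      obtain ⟨q, rfl⟩ := List.mem_ofFn.1 hy
      exact hc _ _
    rcases Fin.eq_zero_or_eq_succ i with rfl | ⟨i', rfl⟩
    · rcases Fin.eq_zero_or_eq_succ j with rfl | ⟨j', rfl⟩
      · exact absurd rfl hij
      · exact aux_mul_prod_zero _ _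
          (by intro x hx; obtain ⟨p, rfl⟩ := List.mem_ofFn.1 hx; exact hc _ _)
          hcmem ⟨f j'.succ, List.mem_ofFn.2 ⟨j', rfl⟩, h1⟩
    · rcases Fin.eq_zero_or_eq_succ j with rfl | ⟨j', rfl⟩
      · exact aux_mul_prod_zero _ _
          (by intro x hx; obtain ⟨p, rfl⟩ := List.mem_ofFn.1 hx; exact hc _ _)
          hcmem ⟨f i'.succ, List.mem_ofFn.2 ⟨i', rfl⟩, h2⟩
      · rw [ih (fun k => f k.succ) (fun p q => hc _ _) i' j'
          (by simpa [Fin.succ_inj] using hij) h1 h2, mul_zero]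

end AuxList

section AuxExt
variable {M : Type*} [AddCommGroup M] [Module ℝ M]

lemma aux_iota_swap (x y : M) : ι ℝ x * ι ℝ y = -(ι ℝ y * ι ℝ x) :=
  eq_neg_of_add_eq_zero_left (ι_add_mul_swap x y)

lemma aux_comm1 (a b c : M) : Commute (ι ℝ a * ι ℝ b) (ι ℝ c) := by
  show _ = _
  rw [mul_assoc, aux_iota_swap b c, mul_neg, ← mul_assoc, aux_iota_swap a c, neg_mul, neg_neg,
    mul_assoc]

lemma aux_comm_pair (a b c d : M) : Commute (ι ℝ a * ι ℝ b) (ι ℝ c * ι ℝ d) :=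
  (aux_comm1 a b c).mul_right (aux_comm1 a b d)

lemma aux_pair_mul_zero (a b u : M) : (ι ℝ a * ι ℝ u) * (ι ℝ b * ι ℝ u) = 0 := by
  rw [mul_assoc, ← mul_assoc (ι ℝ u), aux_iota_swap u b, neg_mul, mul_assoc, ι_sq_zero,
    mul_zero, neg_zero, mul_zero]

end AuxExt

/-- The inclusion of the `ξ`-coordinates. -/
def Jmap (n : ℕ) : (Fin n → ℝ) →ₗ[ℝ] ((Fin n ⊕ Fin n) → ℝ) where
  toFun w := Sum.elim w 0
  map_add' u v := by ext (i | i) <;> simp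
  map_smul' c v := by ext (i | i) <;> simp

lemma Jmap_single {n : ℕ} (i : Fin n) :
    Jmap n (Pi.single i 1) = Pi.single (Sum.inl i) 1 := by
  ext (k | k)
  · simp only [Jmap, LinearMap.coe_mk, AddHom.coe_mk, Sum.elim_inl]
    by_cases h : k = i
    · subst h; simp
    · rw [Pi.single_apply, Pi.single_apply, if_neg h, if_neg (by simp [h])]
  · simp only [Jmap, LinearMap.coe_mk, AddHom.coe_mk, Sum.elim_inr, Pi.zero_apply]
    rw [Pi.single_apply, if_neg (by simp)]

/-- Berezin integration ∫ D(ξ,ξ̄): for any linear functional `B` extracting the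
coefficient of the top monomial `ξ̄ₙξₙ⋯ξ̄₁ξ₁` (i.e. vanishing on all homogeneous
components of degree `< 2n` and normalized by `B(ξ̄ₙξₙ⋯ξ̄₁ξ₁) = 1`), the integral of
`exp((ξ̄, Aξ))` equals `det A`, for an arbitrary real `n×n` matrix `A`. -/
theorem stmt_7 (n : ℕ) (A : Matrix (Fin n) (Fin n) ℝ)
    (B : GA n →ₗ[ℝ] ℝ)
    (hB0 : ∀ k < 2 * n, ∀ x ∈ (LinearMap.range
      (ι ℝ : ((Fin n ⊕ Fin n) → ℝ) →ₗ[ℝ] GA n)) ^ k, B x = 0)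
    (hB1 : B ((List.ofFn fun i : Fin n => xibar i * xi i).reverse.prod) = 1) :
    B (texp (∑ i : Fin n, ∑ j : Fin n, A i j • (xibar i * xi j)) (n + 1))
      = A.det := by
  classical
  set x : GA n := ∑ i : Fin n, ∑ j : Fin n, A i j • (xibar i * xi j) with hxdef
  -- the linear maps `w ↦ ξ̄ᵢ ⋅ ι (J w)`
  set L : Fin n → ((Fin n → ℝ) →ₗ[ℝ] GA n) := fun i =>
    (LinearMap.mulLeft ℝ (xibar i)).comp ((ι ℝ).comp (Jmap n)) with hLdef
  have hLform : ∀ (i : Fin n) (w : Fin n → ℝ),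
      L i w = ι ℝ (Pi.single (Sum.inr i) 1) * ι ℝ (Jmap n w) := by
    intro i w
    rw [hLdef]
    simp only [LinearMap.comp_apply, LinearMap.mulLeft_apply, xibar]
  have hLsingle : ∀ i j : Fin n, L i (Pi.single j 1) = xibar i * xi j := by
    intro i j
    rw [hLform, Jmap_single, xibar, xi]
  have hcommL : ∀ (i j : Fin n) (v w : Fin n → ℝ), Commute (L i v) (L j w) := by
    intro i j v w
    rw [hLform, hLform]
    exact aux_comm_pair _ _ _ _
  have hzeroL : ∀ (i j : Fin n) (w : Fin n → ℝ), L i w * L j w = 0 := by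
    intro i j w
    rw [hLform, hLform]
    exact aux_pair_mul_zero _ _ _
  -- the multilinear map
  set F0 : MultilinearMap ℝ (fun _ : Fin n => (Fin n → ℝ)) (GA n) :=
    (MultilinearMap.mkPiAlgebraFin ℝ n (GA n)).compLinearMap L with hF0def
  have hF0 : ∀ v : Fin n → (Fin n → ℝ), F0 v = (List.ofFn fun i => L i (v i)).prod := by
    intro v
    rw [hF0def, MultilinearMap.compLinearMap_apply, MultilinearMap.mkPiAlgebraFin_apply]
  -- the alternating map
  set F : (Fin n → ℝ) [⋀^Fin n]→ₗ[ℝ] ℝ :=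
    { toMultilinearMap := B.compMultilinearMap F0
      map_eq_zero_of_eq' := by
        intro v i j hv hij
        show B (F0 v) = 0
        rw [hF0, aux_ofFn_prod_zero _ (fun p q => hcommL _ _ _ _) i j hij
          (by rw [hv]; exact hzeroL i j (v j)) (by rw [hv]; exact hzeroL j i (v j)),
          map_zero] } with hFdef
  have hFapp : ∀ v : Fin n → (Fin n → ℝ),
      F v = B ((List.ofFn fun i => L i (v i)).prod) := by
    intro v
    show B (F0 v) = _
    rw [hF0]
  -- value on the standard basis is 1
  have hFe : F ⇑(Pi.basisFun ℝ (Fin n)) = 1 := by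
    rw [hFapp]
    have h1 : (fun i : Fin n => L i ((Pi.basisFun ℝ (Fin n)) i))
        = fun i : Fin n => xibar i * xi i := by
      funext i
      rw [Pi.basisFun_apply, hLsingle]
    have hpw : (List.ofFn fun i : Fin n => xibar i * xi i).reverse.Pairwise Commute := by
      refine List.pairwise_of_forall_mem_list ?_
      intro a ha b hb
      rw [List.mem_reverse] at ha hb
      obtain ⟨p, rfl⟩ := List.mem_ofFn.1 ha
      obtain ⟨q, rfl⟩ := List.mem_ofFn.1 hb
      have := hcommL p q (Pi.single p 1) (Pi.single q 1)
      rwa [hLsingle, hLsingle] at this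
    rw [h1, ← (List.reverse_perm _).prod_eq' hpw]
    exact hB1
  -- `F` on the rows of `A` is `det A`
  have hFrows : F (fun i => A i) = A.det := by
    have hd := DFunLike.congr_fun (F.eq_smul_basis_det (Pi.basisFun ℝ (Fin n))) (fun i => A i)
    rw [AlternatingMap.smul_apply, hFe, Pi.basisFun_det, one_smul] at hd
    rw [hd]; rfl
  -- rewrite `x` as a sum of the `L i (A i)`
  have hx : x = ∑ i : Fin n, L i (A i) := by
    rw [hxdef]
    refine Finset.sum_congr rfl fun i _ => ?_
    have hAi : (A i : Fin n → ℝ) = ∑ j : Fin n, A i j • (Pi.single j 1 : Fin n → ℝ) := by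
      ext k
      rw [Finset.sum_apply]
      simp [Pi.single_apply]
    calc ∑ j : Fin n, A i j • (xibar i * xi j)
        = ∑ j : Fin n, A i j • L i (Pi.single j 1) := by
          refine Finset.sum_congr rfl fun j _ => ?_
          rw [hLsingle]
      _ = L i (∑ j : Fin n, A i j • (Pi.single j 1 : Fin n → ℝ)) := by
          rw [map_sum]
          refine Finset.sum_congr rfl fun j _ => ?_
          rw [map_smul]
      _ = L i (A i) := by rw [← hAi]
  -- the list of quadratic terms
  set l : List (GA n) := List.ofFn (fun i : Fin n => L i (A i)) with hldef
  have hlc : ∀ a ∈ l, ∀ b ∈ l, Commute a b := by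
    intro a ha b hb
    obtain ⟨p, rfl⟩ := List.mem_ofFn.1 ha
    obtain ⟨q, rfl⟩ := List.mem_ofFn.1 hb
    exact hcommL _ _ _ _
  have hlsq : ∀ a ∈ l, a * a = 0 := by
    intro a ha
    obtain ⟨p, rfl⟩ := List.mem_ofFn.1 ha
    exact hzeroL _ _ _
  have hxl : x = l.sum := by rw [hx, hldef, Fin.sum_ofFn]
  have hxn : x ^ n = n.factorial • l.prod := by
    have := aux_sum_pow l hlc hlsq
    rw [List.length_ofFn] at this
    rw [hxl, this]
  -- powers below `n` are killed by `B`
  have hxP : x ∈ (LinearMap.range (ι ℝ : ((Fin n ⊕ Fin n) → ℝ) →ₗ[ℝ] GA n)) ^ 2 := by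
    rw [hxdef, sq]
    refine Submodule.sum_mem _ fun i _ => Submodule.sum_mem _ fun j _ => ?_
    exact Submodule.smul_mem _ _
      (Submodule.mul_mem_mul (LinearMap.mem_range_self _ _) (LinearMap.mem_range_self _ _))
  have hlow : ∀ k < n, B (x ^ k) = 0 := by
    intro k hk
    refine hB0 (2 * k) (by omega) _ ?_
    rw [pow_mul]
    exact Submodule.pow_mem_pow _ hxP k
  -- compute
  simp only [texp]
  rw [map_sum, Finset.sum_eq_single_of_mem n (Finset.self_mem_range_succ n)]
  · rw [map_smul, hxn, map_nsmul, nsmul_eq_mul, smul_eq_mul, ← mul_assoc,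
      inv_mul_cancel₀ (by exact_mod_cast Nat.factorial_ne_zero n), one_mul,
      ← hFrows, hFapp, hldef]
  · intro k hk hkn
    rw [map_smul, hlow k (by simp only [Finset.mem_range] at hk; omega), smul_zero]
end
end

section
/- Matrix-tree theorem: for a finite connected weighted graph G = (V, E, w) with positive edge weights and any fixed vertex o ∈ V, the determinant of the negative graph Laplacian with the row and column indexed by o removed equals the weighted count of spanning trees of G, Σ_{T spanning tree} Π_{e ∈ T} w_e; in the unweighted case (all w_e = 1) it equals the number of spanning trees. -/
noncomputable section
open Classical

/-- The Laplacian matrix of a weighted graph: `Δ(u,v) = w(u,v)` for edges `(u,v)`,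
`Δ(u,u) = -Σ_x w(u,x)` (sum over neighbours), and `0` otherwise. -/
def lap {V : Type*} [Fintype V] [DecidableEq V] (G : SimpleGraph V)
    (w : Sym2 V → ℝ) : Matrix V V ℝ :=
  fun u v =>
    if G.Adj u v then w s(u, v)
    else if u = v then -(∑ x : V, if G.Adj u x then w s(u, x) else 0)
    else 0

/-- The weighted number of spanning trees of `G`: the sum over all spanning trees `T`
of `G` of the product of the weights of the edges of `T`. -/
def treeCount {V : Type*} [Fintype V] [DecidableEq V] (G : SimpleGraph V)
    (w : Sym2 V → ℝ) : ℝ :=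
  ∑ T : SimpleGraph V,
    if T ≤ G ∧ T.IsTree then ∏ e ∈ Finset.univ.filter (· ∈ T.edgeSet), w e else 0

namespace MTT

set_option linter.unusedSectionVars false

variable {V : Type*} [Fintype V] [DecidableEq V]

/-! ### Iteration lemmas -/

lemma iter_stable {g : V → V} {o : V} (ho : g o = o) {x : V} {k m : ℕ}
    (hk : g^[k] x = o) (hkm : k ≤ m) : g^[m] x = o := by
  have : g^[m] x = g^[m - k] (g^[k] x) := by
    rw [← Function.iterate_add_apply]; congr 1; omega
  rw [this, hk, Function.iterate_fixed ho]

lemma periodic_eq_o {g : V → V} {o x : V} {p : ℕ} (ho : g o = o) (hp : 0 < p)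
    (hx : g^[p] x = x) (hc : ∃ k, g^[k] x = o) : x = o := by
  obtain ⟨k, hk⟩ := hc
  have hmul : ∀ m, g^[m * p] x = x := by
    intro m
    induction m with
    | zero => simp
    | succ m ih =>
      have : (m + 1) * p = m * p + p := by ring
      rw [this, Function.iterate_add_apply, hx, ih]
  have h1 : g^[k * p] x = o := iter_stable ho hk (Nat.le_mul_of_pos_right k hp)
  rw [hmul k] at h1; exact h1

lemma conv_bound {g : V → V} {o x : V} (ho : g o = o) (hc : ∃ k, g^[k] x = o) :
    g^[Fintype.card V] x = o := by
  have hk := Nat.find_spec hc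
  rcases le_or_gt (Nat.find hc) (Fintype.card V) with h | h
  · exact iter_stable ho hk h
  · exfalso
    have key : ∀ i j : ℕ, i < j → j < Nat.find hc + 1 → g^[i] x ≠ g^[j] x := by
      intro i j hlt hj hij
      have h2 : g^[(Nat.find hc - j) + i] x = o := by
        rw [Function.iterate_add_apply, hij, ← Function.iterate_add_apply]
        have h3 : Nat.find hc - j + j = Nat.find hc := by omega
        rw [h3]; exact hk
      exact Nat.find_min hc (by omega) h2
    have hinj : Set.InjOn (fun i => g^[i] x) (Finset.range (Nat.find hc + 1)) := by
      intro i hi j hj hij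
      simp only [Finset.coe_range, Set.mem_Iio] at hi hj
      by_contra hne
      rcases Ne.lt_or_gt hne with hlt | hlt
      · exact key i j hlt hj hij
      · exact key j i hlt hi hij.symm
    have hcard := Finset.card_le_card_of_injOn (fun i => g^[i] x)
      (fun i _ => Finset.mem_univ _) hinj
    simp only [Finset.card_range, Finset.card_univ] at hcard
    omega

lemma exists_cycle_of_not_conv {g : V → V} {o x : V}
    (hx : ∀ k, g^[k] x ≠ o) :
    ∃ (y : V) (p : ℕ), y ≠ o ∧ (∀ k, g^[k] y ≠ o) ∧ 0 < p ∧ g^[p] y = y := by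
  have hmaps : ∀ i ∈ Finset.range (Fintype.card V + 1),
      (fun i => g^[i] x) i ∈ (Finset.univ : Finset V) := fun i _ => Finset.mem_univ _
  obtain ⟨i, hi, j, hj, hne, heq⟩ :=
    Finset.exists_ne_map_eq_of_card_lt_of_maps_to
      (by simp [Finset.card_range]) hmaps
  have key : ∀ i j : ℕ, i < j → g^[i] x = g^[j] x →
      ∃ (y : V) (p : ℕ), y ≠ o ∧ (∀ k, g^[k] y ≠ o) ∧ 0 < p ∧ g^[p] y = y := by
    intro i j hlt heq
    refine ⟨g^[i] x, j - i, hx i, fun k => ?_, by omega, ?_⟩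
    · rw [← Function.iterate_add_apply]; exact hx _
    · rw [← Function.iterate_add_apply]
      have : j - i + i = j := by omega
      rw [this]; exact heq.symm
  rcases Ne.lt_or_gt hne with hlt | hlt
  · exact key i j hlt heq
  · exact key j i hlt heq.symm

/-! ### Graph counting lemmas -/

lemma delete_edge_connected {H : SimpleGraph V} {x y : V} (hconn : H.Connected)
    (hreach : (H \ SimpleGraph.fromEdgeSet {s(x, y)}).Reachable x y) :
    (H \ SimpleGraph.fromEdgeSet {s(x, y)}).Connected := by
  set H' := H \ SimpleGraph.fromEdgeSet {s(x, y)} with hH'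
  have key : ∀ (a b : V), H.Walk a b → H'.Reachable a b := by
    intro a b p
    induction p with
    | nil => exact SimpleGraph.Reachable.refl _
    | @cons a c b h q ih =>
      refine SimpleGraph.Reachable.trans ?_ ih
      by_cases hc : s(a, c) = s(x, y)
      · rw [Sym2.eq_iff] at hc
        rcases hc with ⟨rfl, rfl⟩ | ⟨rfl, rfl⟩
        · exact hreach
        · exact hreach.symm
      · refine SimpleGraph.Adj.reachable ?_
        rw [hH', SimpleGraph.sdiff_adj]
        refine ⟨h, ?_⟩
        rw [SimpleGraph.fromEdgeSet_adj]
        simp [hc]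
  haveI : Nonempty V := hconn.nonempty
  exact ⟨fun a b => (hconn.preconnected a b).elim (key a b)⟩

lemma edgeFinset_sdiff_single {H : SimpleGraph V} {x y : V} (he : H.Adj x y)
    (i : Fintype ((H \ SimpleGraph.fromEdgeSet {s(x, y)}).edgeSet)) :
    @SimpleGraph.edgeFinset V _ i = H.edgeFinset.erase s(x, y) := by
  ext e
  rw [SimpleGraph.mem_edgeFinset]
  simp only [Finset.mem_erase, SimpleGraph.mem_edgeFinset,
    SimpleGraph.edgeSet_sdiff, Set.mem_diff, SimpleGraph.edgeSet_fromEdgeSet,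
    SimpleGraph.mem_edgeSet]
  constructor
  · rintro ⟨h1, h2⟩
    refine ⟨?_, h1⟩
    intro hcon
    exact h2 ⟨by simp [hcon], by simp [hcon]; exact he.ne⟩
  · rintro ⟨h1, h2⟩
    refine ⟨h2, ?_⟩
    rintro ⟨hmem, -⟩
    simp only [Set.mem_singleton_iff] at hmem
    exact h1 hmem

lemma edgeFinset_eq_edgeFinset (H : SimpleGraph V) (i1 i2 : Fintype H.edgeSet) :
    @SimpleGraph.edgeFinset V H i1 = @SimpleGraph.edgeFinset V H i2 := by
  ext e; simp [SimpleGraph.mem_edgeFinset]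

lemma edgeFinset_sdiff_single_card {H : SimpleGraph V} {x y : V} (he : H.Adj x y)
    (i : Fintype ((H \ SimpleGraph.fromEdgeSet {s(x, y)}).edgeSet))
    (i2 : Fintype H.edgeSet) :
    (@SimpleGraph.edgeFinset V _ i).card = (@SimpleGraph.edgeFinset V _ i2).card - 1 := by
  rw [edgeFinset_sdiff_single he, edgeFinset_eq_edgeFinset H _ i2]
  exact Finset.card_erase_of_mem (by rw [SimpleGraph.mem_edgeFinset]; exact he)

lemma connected_card_le (H : SimpleGraph V) [iH : Fintype H.edgeSet] (h : H.Connected) :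
    Fintype.card V ≤ (@SimpleGraph.edgeFinset V H iH).card + 1 := by
  suffices H : ∀ (n : ℕ) (H : SimpleGraph V) (iH : Fintype H.edgeSet),
      (@SimpleGraph.edgeFinset V H iH).card = n → H.Connected →
      Fintype.card V ≤ n + 1 by
    exact H _ _ _ rfl h
  intro n
  induction n using Nat.strong_induction_on with
  | _ n IH =>
    intro H iH hn hconn
    by_cases hac : H.IsAcyclic
    · have ht : H.IsTree := ⟨hconn, hac⟩
      have := @SimpleGraph.IsTree.card_edgeFinset V H _ iH ht
      omega
    · rw [SimpleGraph.isAcyclic_iff_forall_edge_isBridge] at hac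
      push_neg at hac
      obtain ⟨e, he, hbr⟩ := hac
      induction e using Sym2.ind with
      | _ x y =>
        rw [SimpleGraph.isBridge_iff] at hbr
        push_neg at hbr
        rw [SimpleGraph.mem_edgeSet] at he
        have hreach := hbr
        have hconn' := delete_edge_connected hconn hreach
        have hmem : s(x, y) ∈ H.edgeFinset := by
          rw [SimpleGraph.mem_edgeFinset]; exact he
        have hcard : (H \ SimpleGraph.fromEdgeSet {s(x, y)}).edgeFinset.card = n - 1 := by
          rw [edgeFinset_sdiff_single_card he _ iH]
          omega
        have hnpos : 1 ≤ n := by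
          rw [← hn]
          exact Finset.card_pos.2 ⟨_, hmem⟩
        have := IH (n - 1) (by omega) _ _ hcard hconn'
        omega

lemma isTree_of_card (H : SimpleGraph V) (hconn : H.Connected)
    (hcard : H.edgeFinset.card + 1 = Fintype.card V) : H.IsTree := by
  refine ⟨hconn, ?_⟩
  by_contra hac
  rw [SimpleGraph.isAcyclic_iff_forall_edge_isBridge] at hac
  push_neg at hac
  obtain ⟨e, he, hbr⟩ := hac
  induction e using Sym2.ind with
  | _ x y =>
    rw [SimpleGraph.isBridge_iff] at hbr
    push_neg at hbr
    rw [SimpleGraph.mem_edgeSet] at he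
    have hreach := hbr
    have hconn' := delete_edge_connected hconn hreach
    have hmem : s(x, y) ∈ H.edgeFinset := by
      rw [SimpleGraph.mem_edgeFinset]; exact he
    have hle := connected_card_le _ hconn'
    rw [edgeFinset_sdiff_single_card he _ _] at hle
    have hpos : 1 ≤ H.edgeFinset.card := Finset.card_pos.2 ⟨_, hmem⟩
    omega

/-! ### Walks along an iteration -/

variable {H : SimpleGraph V} {o : V} {g : V → V}

noncomputable def toWalk (H : SimpleGraph V) (o : V) (g : V → V)
    (hadj : ∀ x, x ≠ o → H.Adj x (g x)) (hconv : ∀ x, ∃ k, g^[k] x = o)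
    (v : V) : H.Walk v o :=
  if hv : v = o then (SimpleGraph.Walk.nil : H.Walk o o).copy hv.symm rfl
  else SimpleGraph.Walk.cons (hadj v hv) (toWalk H o g hadj hconv (g v))
termination_by Nat.find (hconv v)
decreasing_by
  have hk := Nat.find_spec (hconv v)
  have hk0 : Nat.find (hconv v) ≠ 0 := by
    intro h0
    rw [h0] at hk
    simp at hk
    exact hv hk
  have h2 : Nat.find (hconv v) - 1 + 1 = Nat.find (hconv v) := by omega
  rw [← h2, Function.iterate_succ_apply] at hk
  have h3 := Nat.find_min' (hconv (g v)) hk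
  omega

lemma toWalk_ne (hadj : ∀ x, x ≠ o → H.Adj x (g x)) (hconv : ∀ x, ∃ k, g^[k] x = o)
    {v : V} (hv : v ≠ o) :
    toWalk H o g hadj hconv v
      = SimpleGraph.Walk.cons (hadj v hv) (toWalk H o g hadj hconv (g v)) := by
  rw [toWalk.eq_def]
  simp [hv]

lemma find_dec (hconv : ∀ x : V, ∃ k, g^[k] x = o) {v : V} (hv : v ≠ o) :
    Nat.find (hconv (g v)) < Nat.find (hconv v) := by
  have hk := Nat.find_spec (hconv v)
  have hk0 : Nat.find (hconv v) ≠ 0 := by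
    intro h0
    rw [h0] at hk
    simp at hk
    exact hv hk
  have h2 : Nat.find (hconv v) - 1 + 1 = Nat.find (hconv v) := by omega
  rw [← h2, Function.iterate_succ_apply] at hk
  have h3 := Nat.find_min' (hconv (g v)) hk
  omega

lemma toWalk_support (hadj : ∀ x, x ≠ o → H.Adj x (g x))
    (hconv : ∀ x, ∃ k, g^[k] x = o) :
    ∀ (v x : V), x ∈ (toWalk H o g hadj hconv v).support → ∃ m, g^[m] v = x := by
  suffices h : ∀ (n : ℕ) (v : V), Nat.find (hconv v) = n →
      ∀ x ∈ (toWalk H o g hadj hconv v).support, ∃ m, g^[m] v = x by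
    intro v x hx
    exact h _ v rfl x hx
  intro n
  induction n using Nat.strong_induction_on with
  | _ n IH =>
    intro v hn x hx
    by_cases hv : v = o
    · subst hv
      rw [toWalk.eq_def] at hx
      simp at hx
      exact ⟨0, by simp [hx]⟩
    · rw [toWalk_ne hadj hconv hv] at hx
      rw [SimpleGraph.Walk.support_cons] at hx
      rcases List.mem_cons.1 hx with rfl | hx
      · exact ⟨0, rfl⟩
      · obtain ⟨m, hm⟩ := IH _ (hn ▸ find_dec hconv hv) (g v) rfl x hx
        exact ⟨m + 1, by rw [Function.iterate_succ_apply]; exact hm⟩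

lemma toWalk_isPath (ho : g o = o) (hadj : ∀ x, x ≠ o → H.Adj x (g x))
    (hconv : ∀ x, ∃ k, g^[k] x = o) (v : V) :
    (toWalk H o g hadj hconv v).IsPath := by
  suffices h : ∀ (n : ℕ) (v : V), Nat.find (hconv v) = n →
      (toWalk H o g hadj hconv v).IsPath by exact h _ v rfl
  intro n
  induction n using Nat.strong_induction_on with
  | _ n IH =>
    intro v hn
    by_cases hv : v = o
    · subst hv
      rw [toWalk.eq_def]
      simp
    · rw [toWalk_ne hadj hconv hv]
      refine SimpleGraph.Walk.IsPath.cons (IH _ (hn ▸ find_dec hconv hv) (g v) rfl) ?_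
      intro hmem
      obtain ⟨m, hm⟩ := toWalk_support hadj hconv (g v) v hmem
      have : g^[m + 1] v = v := by rw [Function.iterate_succ_apply]; exact hm
      exact hv (periodic_eq_o ho (by omega) this (hconv v))


/-! ### The canonical path in a tree -/

section TreePath

variable (T : SimpleGraph V) (o : V) (hT : T.IsTree)

noncomputable def cpath (v : V) : T.Walk v o := (hT.existsUnique_path v o).choose

lemma cpath_isPath (v : V) : (cpath T o hT v).IsPath :=
  (hT.existsUnique_path v o).choose_spec.1

lemma cpath_unique {v : V} (p : T.Walk v o) (hp : p.IsPath) : p = cpath T o hT v :=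
  (hT.existsUnique_path v o).choose_spec.2 p hp

noncomputable def nxt (v : V) : V := (cpath T o hT v).getVert 1

lemma cpath_not_nil {v : V} (hv : v ≠ o) : ¬(cpath T o hT v).Nil :=
  SimpleGraph.Walk.not_nil_of_ne hv

lemma adj_nxt {v : V} (hv : v ≠ o) : T.Adj v (nxt T o hT v) :=
  SimpleGraph.Walk.adj_snd (cpath_not_nil T o hT hv)

lemma cpath_nxt {v : V} (hv : v ≠ o) :
    cpath T o hT (nxt T o hT v) = (cpath T o hT v).tail :=
  (cpath_unique T o hT _
    ((cpath_isPath T o hT v).tail)).symm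

lemma cpath_length_lt {v : V} (hv : v ≠ o) :
    (cpath T o hT (nxt T o hT v)).length < (cpath T o hT v).length := by
  rw [cpath_nxt T o hT hv]
  have := SimpleGraph.Walk.length_tail_add_one (cpath_not_nil T o hT hv)
  exact lt_of_lt_of_eq (Nat.lt_succ_self _) this

end TreePath

/-! ### The step function of an edge assignment -/

def gstep (o : V) (f : {x : V // x ≠ o} → Sym2 V) : V → V := fun x =>
  if hx : x = o then o
  else if h : x ∈ f ⟨x, hx⟩ then Sym2.Mem.other h else o

lemma gstep_o (o : V) (f : {x : V // x ≠ o} → Sym2 V) : gstep o f o = o := by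
  simp [gstep]

lemma gstep_spec {o : V} {f : {x : V // x ≠ o} → Sym2 V} {x : V} (hx : x ≠ o)
    (h : x ∈ f ⟨x, hx⟩) : s(x, gstep o f x) = f ⟨x, hx⟩ := by
  rw [gstep, dif_neg hx, dif_pos h]
  exact Sym2.other_spec h

/-! ### The edge rows -/

variable (G : SimpleGraph V) (w : Sym2 V → ℝ) (o : V)

def erow (e : Sym2 V) (u v : {x : V // x ≠ o}) : ℝ :=
  (if u = v ∧ (v : V) ∈ e then 1 else 0) - (if e = s(u.1, v.1) then 1 else 0)

lemma incident_sum (u : V) :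
    ∑ e ∈ G.edgeFinset, (if u ∈ e then w e else 0)
      = ∑ x : V, if G.Adj u x then w s(u, x) else 0 := by
  rw [← Finset.sum_filter, ← Finset.sum_filter]
  refine (Finset.sum_bij' (i := fun x hx => s(u, x))
    (j := fun e he => Sym2.Mem.other (Finset.mem_filter.1 he).2)
    (hi := ?_) (hj := ?_) (left_neg := ?_) (right_neg := ?_) (h := ?_)).symm
  · intro x hx
    rw [Finset.mem_filter] at hx ⊢
    refine ⟨by rw [SimpleGraph.mem_edgeFinset, SimpleGraph.mem_edgeSet]; exact hx.2, ?_⟩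
    exact Sym2.mem_mk_left u x
  · intro e he
    have h2 := (Finset.mem_filter.1 he).2
    have h1 := (Finset.mem_filter.1 he).1
    rw [Finset.mem_filter]
    refine ⟨Finset.mem_univ _, ?_⟩
    rw [← SimpleGraph.mem_edgeSet]
    rw [Sym2.other_spec h2]
    rw [SimpleGraph.mem_edgeFinset] at h1
    exact h1
  · intro x hx
    exact Sym2.congr_right.mp (Sym2.other_spec _)
  · intro e he
    exact Sym2.other_spec _
  · intro x hx
    rfl

lemma lap_decomp (u v : {x : V // x ≠ o}) :
    -(lap G w u.1 v.1) = ∑ e ∈ G.edgeFinset, w e * erow o e u v := by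
  by_cases huv : u = v
  · subst huv
    have h1 : ¬ G.Adj u.1 u.1 := G.irrefl
    have hl : lap G w u.1 u.1 = -(∑ x : V, if G.Adj u.1 x then w s(u.1, x) else 0) := by
      rw [lap]; simp [h1]
    rw [hl, neg_neg, ← incident_sum G w u.1]
    refine Finset.sum_congr rfl (fun e he => ?_)
    have hd : ¬ e = s(u.1, u.1) := by
      intro hcon
      have := SimpleGraph.not_isDiag_of_mem_edgeFinset he
      rw [hcon] at this
      exact this (Sym2.mk_isDiag_iff.2 rfl)
    rw [erow]
    simp only [hd, if_false, sub_zero, true_and]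
    by_cases hm : (u : V) ∈ e <;> simp [hm]
  · have h1 : u.1 ≠ v.1 := fun h => huv (Subtype.ext h)
    have hfirst : ∀ e : Sym2 V, (if u = v ∧ (v : V) ∈ e then (1:ℝ) else 0) = 0 := by
      intro e; simp [huv]
    by_cases hadj : G.Adj u.1 v.1
    · have hl : lap G w u.1 v.1 = w s(u.1, v.1) := by
        rw [lap]; simp [hadj]
      rw [hl]
      have hstep : ∀ e ∈ G.edgeFinset, w e * erow o e u v
          = -(if e = s(u.1, v.1) then w e else 0) := by
        intro e he
        rw [erow, hfirst]
        by_cases hc : e = s(u.1, v.1) <;> simp [hc]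
      rw [Finset.sum_congr rfl hstep, Finset.sum_neg_distrib]
      congr 1
      rw [Finset.sum_ite_eq' G.edgeFinset (s(u.1, v.1)) w]
      rw [if_pos (by rw [SimpleGraph.mem_edgeFinset, SimpleGraph.mem_edgeSet]; exact hadj)]
    · have hl : lap G w u.1 v.1 = 0 := by
        rw [lap]; simp [hadj, h1]
      rw [hl, neg_zero, eq_comm]
      refine Finset.sum_eq_zero (fun e he => ?_)
      have hsec : ¬ e = s(u.1, v.1) := by
        intro hcon
        rw [SimpleGraph.mem_edgeFinset, hcon, SimpleGraph.mem_edgeSet] at he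
        exact hadj he
      rw [erow, hfirst, if_neg hsec]
      simp

/-! ### Determinant expansion over edge assignments -/

lemma det_expand :
    (Matrix.of fun u v : {x : V // x ≠ o} => -(lap G w u.1 v.1)).det
      = ∑ r ∈ Fintype.piFinset (fun _ : {x : V // x ≠ o} => G.edgeFinset),
          (∏ u : {x : V // x ≠ o}, w (r u))
            * (Matrix.of fun u v : {x : V // x ≠ o} => erow o (r u) u v).det := by
  have h1 : (Matrix.of fun u v : {x : V // x ≠ o} => -(lap G w u.1 v.1))
      = fun u : {x : V // x ≠ o} => ∑ e ∈ G.edgeFinset, w e • erow o e u := by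
    funext u v
    rw [Matrix.of_apply, lap_decomp G w o u v, Finset.sum_apply]
    exact Finset.sum_congr rfl (fun e _ => rfl)
  rw [show (Matrix.of fun u v : {x : V // x ≠ o} => -(lap G w u.1 v.1)).det
      = Matrix.detRowAlternating
        (Matrix.of fun u v : {x : V // x ≠ o} => -(lap G w u.1 v.1)) from rfl]
  rw [h1]
  rw [show (Matrix.detRowAlternating
        (fun u : {x : V // x ≠ o} => ∑ e ∈ G.edgeFinset, w e • erow o e u) : ℝ)
      = Matrix.detRowAlternating.toMultilinearMap
        (fun u : {x : V // x ≠ o} => ∑ e ∈ G.edgeFinset, w e • erow o e u) from rfl]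
  rw [MultilinearMap.map_sum_finset Matrix.detRowAlternating.toMultilinearMap
    (fun u e => w e • erow o e u) (fun _ => G.edgeFinset)]
  refine Finset.sum_congr rfl (fun r _ => ?_)
  have h2 : (fun u : {x : V // x ≠ o} => w (r u) • erow o (r u) u)
      = fun u : {x : V // x ≠ o} => fun v => w (r u) * erow o (r u) u v := by
    funext u v; rfl
  rw [show (Matrix.detRowAlternating.toMultilinearMap
        (fun u : {x : V // x ≠ o} => w (r u) • erow o (r u) u) : ℝ)
      = (Matrix.of fun u v : {x : V // x ≠ o} => w (r u) * erow o (r u) u v).det from rfl]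
  exact Matrix.det_mul_column (fun u => w (r u))
    (Matrix.of fun u v : {x : V // x ≠ o} => erow o (r u) u v)

/-! ### Determinant of an edge-assignment matrix -/

lemma det_erow_eq (r : {x : V // x ≠ o} → Sym2 V)
    (hr : ∀ u, r u ∈ G.edgeFinset) :
    (Matrix.of fun u v : {x : V // x ≠ o} => erow o (r u) u v).det
      = if (∀ u : {x : V // x ≠ o}, (u : V) ∈ r u)
          ∧ (∀ x : V, ∃ k, (gstep o r)^[k] x = o) then 1 else 0 := by
  by_cases hall : ∀ u : {x : V // x ≠ o}, (u : V) ∈ r u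
  · set g := gstep o r with hg
    have hgo : g o = o := gstep_o o r
    have hstep : ∀ u : {x : V // x ≠ o}, s(u.1, g u.1) = r u :=
      fun u => gstep_spec u.2 (hall u)
    have hgne : ∀ u : {x : V // x ≠ o}, g u.1 ≠ u.1 := by
      intro u h
      have hd := SimpleGraph.not_isDiag_of_mem_edgeFinset (hr u)
      rw [← hstep u, h] at hd
      exact hd (Sym2.mk_isDiag_iff.2 rfl)
    have hmat : (Matrix.of fun u v : {x : V // x ≠ o} => erow o (r u) u v)
        = 1 - (Matrix.of fun u v : {x : V // x ≠ o} =>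
            if (v : V) = g u.1 then (1 : ℝ) else 0) := by
      ext u v
      rw [Matrix.sub_apply, Matrix.one_apply, Matrix.of_apply, Matrix.of_apply, erow,
        ← hstep u]
      congr 1
      · by_cases h : u = v
        · subst h; simp
        · simp [h]
      · have hiff : s(u.1, g u.1) = s(u.1, v.1) ↔ (v : V) = g u.1 := by
          rw [Sym2.congr_right]
          exact eq_comm
        rw [if_congr hiff rfl rfl]
    by_cases hconv : ∀ x : V, ∃ k, g^[k] x = o
    · rw [if_pos ⟨hall, hconv⟩, hmat]
      set A := (Matrix.of fun u v : {x : V // x ≠ o} =>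
        if (v : V) = g u.1 then (1 : ℝ) else 0) with hA
      have hpow : ∀ k, ∀ u v : {x : V // x ≠ o},
          (A ^ k) u v = if g^[k] u.1 = v.1 then 1 else 0 := by
        intro k
        induction k with
        | zero =>
          intro u v
          rw [pow_zero, Matrix.one_apply]
          simp only [Function.iterate_zero_apply]
          by_cases h : u = v
          · subst h; simp
          · rw [if_neg h]; exact (if_neg (fun hc => h (Subtype.ext hc))).symm
        | succ k ih =>
          intro u v
          rw [pow_succ', Matrix.mul_apply]
          by_cases hgu : g u.1 = o
          · have hz : ∀ x : {x : V // x ≠ o}, A u x * (A ^ k) x v = 0 := by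
              intro x
              rw [hA, Matrix.of_apply, if_neg (by rw [hgu]; exact x.2), zero_mul]
            rw [Finset.sum_congr rfl (fun x _ => hz x), Finset.sum_const_zero]
            rw [if_neg ?_]
            rw [Function.iterate_succ_apply, hgu, Function.iterate_fixed hgo]
            exact fun hc => v.2 hc.symm
          · set x0 : {x : V // x ≠ o} := ⟨g u.1, hgu⟩ with hx0
            have hsum : ∀ x : {x : V // x ≠ o}, A u x * (A ^ k) x v
                = if x = x0 then (A ^ k) x v else 0 := by
              intro x
              rw [hA, Matrix.of_apply]
              by_cases h : x = x0
              · rw [if_pos h, if_pos (by rw [h]), one_mul]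
              · rw [if_neg h, if_neg (fun hc => h (Subtype.ext hc)), zero_mul]
            rw [Finset.sum_congr rfl (fun x _ => hsum x),
              Finset.sum_ite_eq' Finset.univ x0 (fun x => (A ^ k) x v),
              if_pos (Finset.mem_univ _), ih, Function.iterate_succ_apply]
      have hnil : IsNilpotent A := by
        refine ⟨Fintype.card V, ?_⟩
        ext u v
        rw [hpow, Matrix.zero_apply, if_neg ?_]
        rw [conv_bound hgo (hconv u.1)]
        exact fun hc => v.2 hc.symm
      have hcp : A.charpoly = Polynomial.X ^ (Fintype.card {x : V // x ≠ o}) :=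
        sub_eq_zero.1 ((Matrix.isNilpotent_charpoly_sub_pow_of_isNilpotent hnil).eq_zero)
      have h4 := eval_det (Matrix.charmatrix A) 1
      rw [Matrix.matPolyEquiv_charmatrix] at h4
      rw [show (Matrix.charmatrix A).det = A.charpoly from rfl, hcp] at h4
      rw [Polynomial.eval_pow, Polynomial.eval_X, one_pow] at h4
      rw [Polynomial.eval_sub, Polynomial.eval_X, Polynomial.eval_C, map_one] at h4
      exact h4.symm
    · rw [if_neg (fun hc => hconv hc.2)]
      push_neg at hconv
      obtain ⟨z, hz⟩ := hconv
      obtain ⟨y, p, hy_ne, hy_no, hp_pos, hp_per⟩ := exists_cycle_of_not_conv hz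
      set R : {x : V // x ≠ o} → ({x : V // x ≠ o} → ℝ) := fun u v =>
        (if u = v then (1:ℝ) else 0) - (if (v : V) = g u.1 then 1 else 0) with hR
      have hMR : (Matrix.of fun u v : {x : V // x ≠ o} => erow o (r u) u v) = Matrix.of R := by
        rw [hmat]; ext u v
        rw [Matrix.sub_apply, Matrix.one_apply, Matrix.of_apply, Matrix.of_apply, hR]
      set C : Finset {x : V // x ≠ o} :=
        Finset.univ.filter (fun u => ∃ m, g^[m] y = u.1) with hC
      have hy_mem : ∀ (m : ℕ), g^[m] y ≠ o := hy_no
      have hmemC : ∀ m : ℕ, (⟨g^[m] y, hy_no m⟩ : {x : V // x ≠ o}) ∈ C := by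
        intro m
        rw [hC, Finset.mem_filter]
        exact ⟨Finset.mem_univ _, m, rfl⟩
      have hperC : ∀ u ∈ C, g^[p] u.1 = u.1 := by
        intro u hu
        rw [hC, Finset.mem_filter] at hu
        obtain ⟨-, m, hm⟩ := hu
        rw [← hm, ← Function.iterate_add_apply, Nat.add_comm p m,
          Function.iterate_add_apply, hp_per]
      have hneC : ∀ u ∈ C, ∀ j : ℕ, g^[j] u.1 ≠ o := by
        intro u hu j
        rw [hC, Finset.mem_filter] at hu
        obtain ⟨-, m, hm⟩ := hu
        rw [← hm, ← Function.iterate_add_apply]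
        exact hy_no _
      have hsumC : ∑ u ∈ C, R u = 0 := by
        funext v
        rw [Finset.sum_apply, Pi.zero_apply]
        have hsplit : ∑ u ∈ C, R u v
            = (∑ u ∈ C, if u = v then (1:ℝ) else 0)
              - ∑ u ∈ C, (if (v : V) = g u.1 then (1:ℝ) else 0) := by
          rw [← Finset.sum_sub_distrib]
        rw [hsplit]
        have h1 : (∑ u ∈ C, if u = v then (1:ℝ) else 0) = if v ∈ C then 1 else 0 :=
          Finset.sum_ite_eq' C v (fun _ => (1:ℝ))
        have hgne_o : ∀ u ∈ C, g u.1 ≠ o := by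
          intro u hu
          have := hneC u hu 1
          rwa [Function.iterate_one] at this
        set σ : {x : V // x ≠ o} → {x : V // x ≠ o} := fun u =>
          if h : g u.1 = o then u else ⟨g u.1, h⟩ with hσ
        set τ : {x : V // x ≠ o} → {x : V // x ≠ o} := fun u =>
          if h : g^[p-1] u.1 = o then u else ⟨g^[p-1] u.1, h⟩ with hτ
        have hσ1 : ∀ u ∈ C, (σ u).1 = g u.1 := by
          intro u hu
          rw [hσ]; simp only
          rw [dif_neg (hgne_o u hu)]
        have hτ1 : ∀ u ∈ C, (τ u).1 = g^[p-1] u.1 := by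
          intro u hu
          rw [hτ]; simp only
          rw [dif_neg (hneC u hu (p-1))]
        have hmemC' : ∀ u ∈ C, ∀ j : ℕ, (∃ m, g^[m] y = g^[j] u.1) := by
          intro u hu j
          rw [hC, Finset.mem_filter] at hu
          obtain ⟨-, m, hm⟩ := hu
          exact ⟨j + m, by rw [Function.iterate_add_apply, hm]⟩
        have hσC : ∀ u ∈ C, σ u ∈ C := by
          intro u hu
          rw [hC, Finset.mem_filter]
          refine ⟨Finset.mem_univ _, ?_⟩
          rw [hσ1 u hu]
          have := hmemC' u hu 1
          rwa [Function.iterate_one] at this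
        have hτC : ∀ u ∈ C, τ u ∈ C := by
          intro u hu
          rw [hC, Finset.mem_filter]
          refine ⟨Finset.mem_univ _, ?_⟩
          rw [hτ1 u hu]
          exact hmemC' u hu (p-1)
        have hστ : ∀ u ∈ C, σ (τ u) = u := by
          intro u hu
          refine Subtype.ext ?_
          rw [hσ1 _ (hτC u hu), hτ1 u hu]
          have hp1 : p - 1 + 1 = p := by omega
          rw [show g (g^[p-1] u.1) = g^[p-1+1] u.1
            from (Function.iterate_succ_apply' g (p-1) u.1).symm, hp1]
          exact hperC u hu
        have hτσ : ∀ u ∈ C, τ (σ u) = u := by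
          intro u hu
          refine Subtype.ext ?_
          rw [hτ1 _ (hσC u hu), hσ1 u hu]
          have hp1 : p - 1 + 1 = p := by omega
          rw [show g^[p-1] (g u.1) = g^[p-1+1] u.1
            from (Function.iterate_succ_apply g (p-1) u.1).symm, hp1]
          exact hperC u hu
        have h2 : (∑ u ∈ C, if (v : V) = g u.1 then (1:ℝ) else 0)
            = if v ∈ C then 1 else 0 := by
          have hcong : ∀ u ∈ C, (if (v : V) = g u.1 then (1:ℝ) else 0)
              = if σ u = v then 1 else 0 := by
            intro u hu
            refine if_congr ?_ rfl rfl
            rw [← hσ1 u hu]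
            rw [Subtype.ext_iff]
            exact eq_comm
          rw [Finset.sum_congr rfl hcong]
          refine (Finset.sum_bij' (i := fun u (hu : u ∈ C) => σ u)
            (j := fun u (hu : u ∈ C) => τ u) (hi := fun u hu => hσC u hu)
            (hj := fun u hu => hτC u hu)
            (left_neg := fun u hu => hτσ u hu)
            (right_neg := fun u hu => hστ u hu)
            (h := fun u hu => rfl)).trans (Finset.sum_ite_eq' C v (fun _ => (1:ℝ)))
        rw [h1, h2, sub_self]
      have hdep : ¬ LinearIndependent ℝ R := by
        rw [Fintype.not_linearIndependent_iff]
        refine ⟨fun u => if u ∈ C then 1 else 0, ?_, ⟨⟨y, hy_ne⟩, ?_⟩⟩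
        · rw [Finset.sum_congr rfl
            (fun u (_ : u ∈ Finset.univ) => by rw [ite_smul, one_smul, zero_smul])]
          rw [Finset.sum_ite_mem, Finset.univ_inter]
          exact hsumC
        · have hy : (⟨y, hy_ne⟩ : {x : V // x ≠ o}) ∈ C := by
            have := hmemC 0
            simpa using this
          simp only [hy, if_true]
          exact one_ne_zero
      rw [hMR]
      exact Matrix.detRowAlternating.map_linearDependent R hdep
  · rw [if_neg (fun hc => hall hc.1)]
    push_neg at hall
    obtain ⟨u, hu⟩ := hall
    refine Matrix.det_eq_zero_of_row_eq_zero u (fun v => ?_)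
    rw [Matrix.of_apply, erow]
    rw [if_neg ?_, if_neg ?_, sub_zero]
    · intro hc
      rw [hc] at hu
      exact hu (Sym2.mem_mk_left u.1 v.1)
    · rintro ⟨rfl, hm⟩
      exact hu hm

/-! ### Summing over admissible assignments -/

lemma det_eq_sum_S :
    (Matrix.of fun u v : {x : V // x ≠ o} => -(lap G w u.1 v.1)).det
      = ∑ r ∈ (Fintype.piFinset (fun _ : {x : V // x ≠ o} => G.edgeFinset)).filter
          (fun r => (∀ u : {x : V // x ≠ o}, (u : V) ∈ r u)
            ∧ (∀ x : V, ∃ k, (gstep o r)^[k] x = o)),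
          ∏ u : {x : V // x ≠ o}, w (r u) := by
  rw [det_expand, Finset.sum_filter]
  refine Finset.sum_congr rfl (fun r hr => ?_)
  rw [det_erow_eq G o r (fun u => (Fintype.mem_piFinset.1 hr) u)]
  by_cases hc : (∀ u : {x : V // x ≠ o}, (u : V) ∈ r u)
      ∧ (∀ x : V, ∃ k, (gstep o r)^[k] x = o)
  · rw [if_pos hc, if_pos hc, mul_one]
  · rw [if_neg hc, if_neg hc, mul_zero]

/-! ### Injectivity of admissible assignments -/

lemma assign_inj (f : {x : V // x ≠ o} → Sym2 V)
    (hall : ∀ u : {x : V // x ≠ o}, (u : V) ∈ f u)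
    (hconv : ∀ x : V, ∃ k, (gstep o f)^[k] x = o) :
    Function.Injective f := by
  intro u u' h
  have hstep : ∀ v : {x : V // x ≠ o}, s(v.1, gstep o f v.1) = f v :=
    fun v => gstep_spec v.2 (hall v)
  have h2 : s(u.1, gstep o f u.1) = s(u'.1, gstep o f u'.1) := by
    rw [hstep u, hstep u', h]
  rw [Sym2.eq_iff] at h2
  rcases h2 with ⟨h3, -⟩ | ⟨h3, h4⟩
  · exact Subtype.ext h3
  · exfalso
    have hper : (gstep o f)^[2] u.1 = u.1 := by
      have h5 : (gstep o f)^[2] u.1 = gstep o f (gstep o f u.1) := by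
        rw [Function.iterate_succ_apply', Function.iterate_one]
      rw [h5, h4, ← h3]
    exact u.2 (periodic_eq_o (gstep_o o f) (by omega) hper (hconv u.1))

/-! ### From an admissible assignment to a spanning tree -/

section Forward

variable (r : {x : V // x ≠ o} → Sym2 V)

lemma image_eq_filter_edgeSet (hr : ∀ u, r u ∈ G.edgeFinset) :
    Finset.univ.filter
        (· ∈ (SimpleGraph.fromEdgeSet (↑(Finset.univ.image r) : Set (Sym2 V))).edgeSet)
      = Finset.univ.image r := by
  ext e
  rw [Finset.mem_filter, SimpleGraph.edgeSet_fromEdgeSet]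
  constructor
  · rintro ⟨-, he, -⟩
    exact Finset.mem_coe.1 he
  · intro he
    refine ⟨Finset.mem_univ _, Finset.mem_coe.2 he, ?_⟩
    obtain ⟨u, -, hu⟩ := Finset.mem_image.1 he
    rw [← hu]
    exact SimpleGraph.not_isDiag_of_mem_edgeFinset (hr u)

lemma Tr_le (hr : ∀ u, r u ∈ G.edgeFinset) :
    SimpleGraph.fromEdgeSet (↑(Finset.univ.image r) : Set (Sym2 V)) ≤ G := by
  rw [← SimpleGraph.fromEdgeSet_edgeSet G]
  refine SimpleGraph.fromEdgeSet_mono ?_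
  intro e he
  rw [Finset.coe_image, Finset.coe_univ, Set.image_univ, Set.mem_range] at he
  obtain ⟨u, hu⟩ := he
  rw [← hu]
  exact SimpleGraph.mem_edgeFinset.1 (hr u)

lemma Tr_adj (hall : ∀ u : {x : V // x ≠ o}, (u : V) ∈ r u)
    (hr : ∀ u, r u ∈ G.edgeFinset) :
    ∀ x, x ≠ o → (SimpleGraph.fromEdgeSet (↑(Finset.univ.image r) : Set (Sym2 V))).Adj
      x (gstep o r x) := by
  intro x hx
  rw [SimpleGraph.fromEdgeSet_adj]
  constructor
  · rw [gstep_spec hx (hall ⟨x, hx⟩)]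
    rw [Finset.coe_image, Finset.coe_univ, Set.image_univ, Set.mem_range]
    exact ⟨⟨x, hx⟩, rfl⟩
  · intro hcon
    have hd := SimpleGraph.not_isDiag_of_mem_edgeFinset (hr ⟨x, hx⟩)
    rw [← gstep_spec hx (hall ⟨x, hx⟩), ← hcon] at hd
    exact hd (Sym2.mk_isDiag_iff.2 rfl)

lemma card_ne_o : Fintype.card {x : V // x ≠ o} = Fintype.card V - 1 := by
  have h1 := Fintype.card_subtype_compl (fun x : V => x = o)
  have h2 : Fintype.card {x : V // x = o} = 1 := Fintype.card_subtype_eq o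
  rw [h2] at h1
  exact h1

lemma Tr_isTree (hall : ∀ u : {x : V // x ≠ o}, (u : V) ∈ r u)
    (hr : ∀ u, r u ∈ G.edgeFinset)
    (hconv : ∀ x : V, ∃ k, (gstep o r)^[k] x = o) :
    (SimpleGraph.fromEdgeSet (↑(Finset.univ.image r) : Set (Sym2 V))).IsTree := by
  set T := SimpleGraph.fromEdgeSet (↑(Finset.univ.image r) : Set (Sym2 V)) with hTdef
  have hconn : T.Connected := by
    haveI : Nonempty V := ⟨o⟩
    refine ⟨fun a b => ?_⟩
    have ha := (toWalk T o (gstep o r) (Tr_adj G o r hall hr) hconv a).reachable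
    have hb := (toWalk T o (gstep o r) (Tr_adj G o r hall hr) hconv b).reachable
    exact ha.trans hb.symm
  refine isTree_of_card T hconn ?_
  have hfe : ∀ (i : Fintype T.edgeSet),
      (@SimpleGraph.edgeFinset V T i) = Finset.univ.filter (· ∈ T.edgeSet) := by
    intro i; ext e; rw [SimpleGraph.mem_edgeFinset, Finset.mem_filter]
    simp
  rw [hfe]
  have hfi : Finset.univ.filter (· ∈ T.edgeSet) = Finset.univ.image r := by
    ext e
    have := congrArg (e ∈ ·) (image_eq_filter_edgeSet G o r hr)
    rw [Finset.mem_filter] at this ⊢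
    exact Iff.of_eq this
  rw [hfi]
  rw [Finset.card_image_of_injective _ (assign_inj o r hall hconv), Finset.card_univ,
    card_ne_o]
  have : 0 < Fintype.card V := Fintype.card_pos_iff.2 ⟨o⟩
  omega

end Forward

/-! ### From a spanning tree to an admissible assignment -/

section Backward

variable (T : SimpleGraph V) (hT : T.IsTree)

lemma fT_mem (hle : T ≤ G) (v : {x : V // x ≠ o}) :
    s(v.1, nxt T o hT v.1) ∈ G.edgeFinset := by
  rw [SimpleGraph.mem_edgeFinset, SimpleGraph.mem_edgeSet]
  exact hle (adj_nxt T o hT v.2)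

lemma gstep_fT {x : V} (hx : x ≠ o) :
    gstep o (fun v : {x : V // x ≠ o} => s(v.1, nxt T o hT v.1)) x = nxt T o hT x := by
  have h : x ∈ (fun v : {x : V // x ≠ o} => s(v.1, nxt T o hT v.1)) ⟨x, hx⟩ :=
    Sym2.mem_mk_left _ _
  have h2 := gstep_spec (f := fun v : {x : V // x ≠ o} => s(v.1, nxt T o hT v.1)) hx h
  exact Sym2.congr_right.1 h2

lemma conv_fT : ∀ x : V, ∃ k,
    (gstep o (fun v : {x : V // x ≠ o} => s(v.1, nxt T o hT v.1)))^[k] x = o := by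
  set g := gstep o (fun v : {x : V // x ≠ o} => s(v.1, nxt T o hT v.1)) with hg
  suffices h : ∀ (n : ℕ) (x : V), (cpath T o hT x).length = n → ∃ k, g^[k] x = o by
    intro x; exact h _ x rfl
  intro n
  induction n using Nat.strong_induction_on with
  | _ n IH =>
    intro x hn
    by_cases hx : x = o
    · exact ⟨0, hx⟩
    · have hlt := cpath_length_lt T o hT hx
      rw [hn] at hlt
      obtain ⟨k, hk⟩ := IH _ hlt (nxt T o hT x) rfl
      refine ⟨k + 1, ?_⟩
      rw [Function.iterate_succ_apply, hg, gstep_fT o T hT hx]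
      exact hk

lemma fT_image (hle : T ≤ G) :
    Finset.univ.image (fun v : {x : V // x ≠ o} => s(v.1, nxt T o hT v.1))
      = Finset.univ.filter (· ∈ T.edgeSet) := by
  refine Finset.eq_of_subset_of_card_le ?_ ?_
  · intro e he
    rw [Finset.mem_image] at he
    obtain ⟨v, -, hv⟩ := he
    rw [Finset.mem_filter]
    refine ⟨Finset.mem_univ _, ?_⟩
    rw [← hv, SimpleGraph.mem_edgeSet]
    exact adj_nxt T o hT v.2
  · have h1 : Finset.univ.filter (· ∈ T.edgeSet) = T.edgeFinset := by
      ext e; rw [SimpleGraph.mem_edgeFinset, Finset.mem_filter]; simp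
    rw [h1]
    rw [Finset.card_image_of_injective _
      (assign_inj o _ (fun u => Sym2.mem_mk_left _ _) (conv_fT o T hT)),
      Finset.card_univ, card_ne_o]
    have h2 := hT.card_edgeFinset
    omega

lemma fT_fromEdgeSet (hle : T ≤ G) :
    SimpleGraph.fromEdgeSet
      (↑(Finset.univ.image (fun v : {x : V // x ≠ o} => s(v.1, nxt T o hT v.1)))
        : Set (Sym2 V)) = T := by
  rw [fT_image G o T hT hle]
  have h1 : (↑(Finset.univ.filter (· ∈ T.edgeSet)) : Set (Sym2 V)) = T.edgeSet := by
    ext e; simp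
  rw [h1, SimpleGraph.fromEdgeSet_edgeSet]

end Backward

end MTT

/-- Matrix-tree (Kirchhoff) theorem: for a finite connected graph `G` with positive
edge weights and any vertex `o`, the determinant of the negative Laplacian with the
row and column of `o` removed equals the weighted count of spanning trees
`Σ_{T spanning tree} Π_{e ∈ T} w_e` (the number of spanning trees when all weights
are `1`). -/
theorem stmt_12 {V : Type*} [Fintype V] [DecidableEq V] (G : SimpleGraph V)
    (w : Sym2 V → ℝ) (hw : ∀ e ∈ G.edgeSet, 0 < w e)
    (hconn : G.Connected) (o : V) :
    Matrix.det (Matrix.of fun u v : {x : V // x ≠ o} => -(lap G w u.1 v.1))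
      = treeCount G w := by
  rw [MTT.det_eq_sum_S G w o, treeCount, ← Finset.sum_filter]
  refine Finset.sum_bij'
    (i := fun r _ => SimpleGraph.fromEdgeSet (↑(Finset.univ.image r) : Set (Sym2 V)))
    (j := fun T hT => fun v : {x : V // x ≠ o} =>
      s(v.1, MTT.nxt T o (Finset.mem_filter.1 hT).2.2 v.1))
    (hi := ?_) (hj := ?_) (left_neg := ?_) (right_neg := ?_) (h := ?_)
  · intro r hr
    obtain ⟨hr1, hall, hconv⟩ := Finset.mem_filter.1 hr
    have hr' : ∀ u, r u ∈ G.edgeFinset := fun u => Fintype.mem_piFinset.1 hr1 u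
    rw [Finset.mem_filter]
    exact ⟨Finset.mem_univ _, MTT.Tr_le G o r hr', MTT.Tr_isTree G o r hall hr' hconv⟩
  · intro T hT
    obtain ⟨-, hle, hTree⟩ := Finset.mem_filter.1 hT
    rw [Finset.mem_filter]
    refine ⟨Fintype.mem_piFinset.2 (fun v => MTT.fT_mem G o T (Finset.mem_filter.1 hT).2.2 hle v), ?_, ?_⟩
    · exact fun v => Sym2.mem_mk_left _ _
    · exact MTT.conv_fT o T (Finset.mem_filter.1 hT).2.2
  · intro r hr
    obtain ⟨hr1, hall, hconv⟩ := Finset.mem_filter.1 hr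
    have hr' : ∀ u, r u ∈ G.edgeFinset := fun u => Fintype.mem_piFinset.1 hr1 u
    funext v
    set T := SimpleGraph.fromEdgeSet (↑(Finset.univ.image r) : Set (Sym2 V)) with hTdef
    have hT' : T.IsTree := MTT.Tr_isTree G o r hall hr' hconv
    have hadj := MTT.Tr_adj G o r hall hr'
    have hup : MTT.toWalk T o (MTT.gstep o r) hadj hconv v.1
        = MTT.cpath T o hT' v.1 :=
      MTT.cpath_unique T o hT' _ (MTT.toWalk_isPath (MTT.gstep_o o r) hadj hconv v.1)
    have hnxt : MTT.nxt T o hT' v.1 = MTT.gstep o r v.1 := by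
      rw [MTT.nxt, ← hup, MTT.toWalk_ne hadj hconv v.2]
      rw [show (1:ℕ) = 0 + 1 from rfl, SimpleGraph.Walk.getVert_cons_succ,
        SimpleGraph.Walk.getVert_zero]
    have hfinal : s(v.1, MTT.nxt T o hT' v.1) = r v := by
      rw [hnxt]
      exact MTT.gstep_spec v.2 (hall v)
    exact hfinal
  · intro T hT
    exact MTT.fT_fromEdgeSet G o T (Finset.mem_filter.1 hT).2.2 (Finset.mem_filter.1 hT).2.1
  · intro r hr
    obtain ⟨hr1, hall, hconv⟩ := Finset.mem_filter.1 hr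
    have hr' : ∀ u, r u ∈ G.edgeFinset := fun u => Fintype.mem_piFinset.1 hr1 u
    refine Eq.trans ?_ (Finset.prod_congr (s₁ := Finset.univ.image r) ?_ (fun _ _ => rfl))
    rotate_left
    · ext e
      have := congrArg (e ∈ ·) (MTT.image_eq_filter_edgeSet G o r hr')
      simp only [Finset.mem_filter] at this ⊢
      exact (Iff.of_eq this).symm
    rw [Finset.prod_image (fun x _ y _ h => MTT.assign_inj o r hall hconv h)]

end
end
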